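/- Error bound for convex recovery over a cone: let x_0 ∈ R^d, Φ an m×d matrix, y = Φx_0 + ε with ‖ε‖_2 ≤ η, and f : R^d → R ∪ {∞} proper convex. If x# minimizes f(x) subject to ‖Φx − y‖_2 ≤ η, then ‖x# − x_0‖_2 ≤ 2η / λ_min(Φ; D(f, x_0)), where λ_min(Φ; K) = inf{‖Φu‖_2 : u ∈ K, ‖u‖_2 = 1} and D(f,x) = ∪_{τ>0}{y : f(x+τy) ≤ f(x)} is the descent cone. -/
import Mathlib


open Matrix

/-- The linear measurement map `x ↦ Φ x` regarded as a map between Euclidean spaces (so that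
norms are the `ℓ₂`-norms). -/
noncomputable def mulVecEuclidean {m d : ℕ} (Φ : Matrix (Fin m) (Fin d) ℝ)
    (x : EuclideanSpace ℝ (Fin d)) : EuclideanSpace ℝ (Fin m) :=
  (WithLp.equiv 2 (Fin m → ℝ)).symm (Φ.mulVec ((WithLp.equiv 2 (Fin d → ℝ)) x))

lemma mulVecEuclidean_sub {m d : ℕ} (Φ : Matrix (Fin m) (Fin d) ℝ)
    (x z : EuclideanSpace ℝ (Fin d)) :
    mulVecEuclidean Φ (x - z) = mulVecEuclidean Φ x - mulVecEuclidean Φ z := by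
  simp [mulVecEuclidean, Matrix.mulVec_sub]

lemma mulVecEuclidean_smul {m d : ℕ} (Φ : Matrix (Fin m) (Fin d) ℝ) (c : ℝ)
    (x : EuclideanSpace ℝ (Fin d)) :
    mulVecEuclidean Φ (c • x) = c • mulVecEuclidean Φ x := by
  simp [mulVecEuclidean, Matrix.mulVec_smul]

/-- Error bound for convex recovery over a cone (Tropp, after
Chandrasekaran–Recht–Parrilo–Willsky).  Let `y = Φ x₀ + ε` with `‖ε‖₂ ≤ η`, let
`f : ℝ^d → ℝ ∪ {∞}` be proper convex, and let `x#` minimize `f` subject to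
`‖Φx − y‖₂ ≤ η`.  Then `‖x# − x₀‖₂ ≤ 2η / λ_min(Φ; D(f,x₀))`, where
`λ_min(Φ; K) = inf {‖Φu‖₂ : u ∈ K, ‖u‖₂ = 1}` and
`D(f,x) = ∪_{τ>0} {u : f(x + τu) ≤ f(x)}` is the descent cone; stated in the
division-free form `λ_min(Φ; D(f,x₀)) · ‖x# − x₀‖₂ ≤ 2η`, which is trivially true
when `λ_min = 0` (interpreting `2η/0 = ∞`). -/
theorem convex_recovery_error_bound (d m : ℕ) (Φ : Matrix (Fin m) (Fin d) ℝ)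
    (x₀ : EuclideanSpace ℝ (Fin d)) (ε : EuclideanSpace ℝ (Fin m)) (η : ℝ) (hε : ‖ε‖ ≤ η)
    (f : EuclideanSpace ℝ (Fin d) → EReal)
    (hconv : ∀ x y : EuclideanSpace ℝ (Fin d), ∀ a b : ℝ, 0 ≤ a → 0 ≤ b → a + b = 1 →
      f (a • x + b • y) ≤ (a : EReal) * f x + (b : EReal) * f y)
    (hproper : ∃ x, f x ≠ ⊤) (hnobot : ∀ x, f x ≠ ⊥)
    (y : EuclideanSpace ℝ (Fin m)) (hy : y = mulVecEuclidean Φ x₀ + ε)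
    (xs : EuclideanSpace ℝ (Fin d))
    (hfeas : ‖mulVecEuclidean Φ xs - y‖ ≤ η)
    (hmin : ∀ x : EuclideanSpace ℝ (Fin d),
      ‖mulVecEuclidean Φ x - y‖ ≤ η → f xs ≤ f x) :
    sInf {r : ℝ | ∃ u : EuclideanSpace ℝ (Fin d),
        (∃ τ : ℝ, 0 < τ ∧ f (x₀ + τ • u) ≤ f x₀) ∧ ‖u‖ = 1 ∧
          r = ‖mulVecEuclidean Φ u‖}
      * ‖xs - x₀‖ ≤ 2 * η := by

  have hηnn : 0 ≤ η := le_trans (norm_nonneg ε) hε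
  have hx0feas : ‖mulVecEuclidean Φ x₀ - y‖ ≤ η := by
    rw [hy]
    simpa using hε
  by_cases h : xs = x₀
  · subst h; simp; linarith
  · set t := ‖xs - x₀‖ with ht_def
    have ht : 0 < t := norm_pos_iff.mpr (sub_ne_zero.mpr h)
    set u : EuclideanSpace ℝ (Fin d) := t⁻¹ • (xs - x₀) with hu_def
    have hu : ‖u‖ = 1 := by
      rw [hu_def, norm_smul, norm_inv, norm_norm, ← ht_def, inv_mul_cancel₀ ht.ne']
    have hxu : x₀ + t • u = xs := by
      rw [hu_def, smul_smul, mul_inv_cancel₀ ht.ne', one_smul]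
      abel
    have hbdd : BddBelow {r : ℝ | ∃ u : EuclideanSpace ℝ (Fin d),
        (∃ τ : ℝ, 0 < τ ∧ f (x₀ + τ • u) ≤ f x₀) ∧ ‖u‖ = 1 ∧
          r = ‖mulVecEuclidean Φ u‖} := by
      refine ⟨0, ?_⟩
      rintro r ⟨v, -, -, rfl⟩
      exact norm_nonneg _
    have hmem : ‖mulVecEuclidean Φ u‖ ∈ {r : ℝ | ∃ u : EuclideanSpace ℝ (Fin d),
        (∃ τ : ℝ, 0 < τ ∧ f (x₀ + τ • u) ≤ f x₀) ∧ ‖u‖ = 1 ∧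
          r = ‖mulVecEuclidean Φ u‖} := by
      exact ⟨u, ⟨t, ht, by rw [hxu]; exact hmin x₀ hx0feas⟩, hu, rfl⟩
    have h1 := csInf_le hbdd hmem
    have h2 : ‖mulVecEuclidean Φ u‖ * t = ‖mulVecEuclidean Φ (xs - x₀)‖ := by
      rw [hu_def, mulVecEuclidean_smul, norm_smul, norm_inv, norm_norm, ← ht_def]
      field_simp
    have h3 : ‖mulVecEuclidean Φ (xs - x₀)‖ ≤ 2 * η := by
      have : mulVecEuclidean Φ (xs - x₀) =
          (mulVecEuclidean Φ xs - y) - (mulVecEuclidean Φ x₀ - y) := by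
        rw [mulVecEuclidean_sub]; abel
      rw [this]
      calc ‖(mulVecEuclidean Φ xs - y) - (mulVecEuclidean Φ x₀ - y)‖
          ≤ ‖mulVecEuclidean Φ xs - y‖ + ‖mulVecEuclidean Φ x₀ - y‖ := norm_sub_le _ _
        _ ≤ 2 * η := by linarith
    calc sInf _ * t ≤ ‖mulVecEuclidean Φ u‖ * t :=
          mul_le_mul_of_nonneg_right h1 ht.le
      _ = ‖mulVecEuclidean Φ (xs - x₀)‖ := h2
      _ ≤ 2 * η := h3
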